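/- If V ∈ C¹(ℝⁿ, ℝ₊) satisfies V(0) = 0, V(x) > 0 for x ≠ 0, V(x) → +∞ as ‖x‖ → +∞, and ∇V(x) · f(x) ≤ 0 for all x ≠ 0, where f ∈ C¹(ℝⁿ, ℝⁿ) with f(0) = 0, then the system ẋ = f(x) is stable at the origin: for every ε > 0 there exists η > 0 such that every solution with ‖x(0)‖ < η satisfies ‖x(t)‖ ≤ ε for all t ≥ 0. -/

import Mathlib

open Filter

/-- Lyapunov's theorem (1892): existence of a global Lyapunov function implies
stability of the origin for the system `ẋ = f(x)`. -/
theorem lyapunov_stability {n : ℕ}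
    (f : EuclideanSpace ℝ (Fin n) → EuclideanSpace ℝ (Fin n))
    (hf : ContDiff ℝ 1 f) (hf0 : f 0 = 0)
    (V : EuclideanSpace ℝ (Fin n) → ℝ) (hVC : ContDiff ℝ 1 V)
    (hV0 : V 0 = 0) (hVpos : ∀ x, x ≠ 0 → 0 < V x)
    (hVinf : Tendsto V (comap norm atTop) atTop)
    (hVdec : ∀ x, x ≠ 0 → ∑ i, gradient V x i * f x i ≤ 0) :
    ∀ ε > (0 : ℝ), ∃ η > (0 : ℝ), ∀ x : ℝ → EuclideanSpace ℝ (Fin n),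
      (∀ t, 0 ≤ t → HasDerivAt x (f (x t)) t) → ‖x 0‖ < η →
      ∀ t, 0 ≤ t → ‖x t‖ ≤ ε := by
  intro ε hε
  by_cases hS : ∃ y : EuclideanSpace ℝ (Fin n), ‖y‖ = ε
  · -- sphere is nonempty
    have hcpt : IsCompact {y : EuclideanSpace ℝ (Fin n) | ‖y‖ = ε} := by
      have h : {y : EuclideanSpace ℝ (Fin n) | ‖y‖ = ε} = Metric.sphere 0 ε := by
        ext y; simp [dist_zero_right]
      rw [h]; exact isCompact_sphere 0 ε
    obtain ⟨y₀, hy₀, hmin⟩ := hcpt.exists_isMinOn ⟨hS.choose, hS.choose_spec⟩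
      hVC.continuous.continuousOn
    set m := V y₀ with hm_def
    have hy₀ne : y₀ ≠ 0 := by
      intro h
      subst h
      simp only [Set.mem_setOf_eq, norm_zero] at hy₀
      exact absurd hy₀.symm (ne_of_gt hε)
    have hm : 0 < m := hVpos y₀ hy₀ne
    -- continuity of V at 0 gives δ
    have hcont0 : Tendsto V (nhds 0) (nhds 0) := by
      have := hVC.continuous.tendsto 0
      rwa [hV0] at this
    obtain ⟨δ, hδpos, hδ⟩ :=
      Metric.eventually_nhds_iff.mp (hcont0.eventually (gt_mem_nhds hm))
    refine ⟨min δ ε, lt_min hδpos hε, ?_⟩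
    intro x hx hx0 t ht
    -- derivative of V ∘ x
    have hderiv : ∀ s, 0 ≤ s →
        HasDerivAt (fun u => V (x u))
          (inner ℝ (gradient V (x s)) (f (x s)) : ℝ) s := by
      intro s hs
      have hdV : DifferentiableAt ℝ V (x s) := hVC.differentiable one_ne_zero (x s)
      have hg := hdV.hasGradientAt
      have hfd := hg.hasFDerivAt
      have := hfd.comp_hasDerivAt s (hx s hs)
      exact this
    have hnonpos : ∀ s, 0 ≤ s →
        (inner ℝ (gradient V (x s)) (f (x s)) : ℝ) ≤ 0 := by
      intro s hs
      by_cases h0 : x s = 0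
      · rw [h0, hf0, inner_zero_right]
      · have := hVdec (x s) h0
        have hinner : (inner ℝ (gradient V (x s)) (f (x s)) : ℝ)
            = ∑ i, gradient V (x s) i * f (x s) i := by
          simp only [PiLp.inner_apply, Real.inner_apply]
        rw [hinner]; exact this
    have hcontx : ∀ s, 0 ≤ s → ContinuousAt x s := fun s hs => (hx s hs).continuousAt
    have hanti : AntitoneOn (fun u => V (x u)) (Set.Ici 0) := by
      apply antitoneOn_of_deriv_nonpos (convex_Ici 0)
      · intro s hs
        exact ((hderiv s hs).continuousAt).continuousWithinAt
      · intro s hs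
        rw [interior_Ici] at hs
        exact (hderiv s (le_of_lt hs)).differentiableAt.differentiableWithinAt
      · intro s hs
        rw [interior_Ici] at hs
        rw [(hderiv s (le_of_lt hs)).deriv]
        exact hnonpos s (le_of_lt hs)
    have hVxt : V (x t) < m := by
      have h1 : V (x t) ≤ V (x 0) := hanti Set.self_mem_Ici ht ht
      have h2 : V (x 0) < m := by
        have : dist (x 0) 0 < δ := by
          rw [dist_zero_right]
          exact lt_of_lt_of_le hx0 (min_le_left _ _)
        exact hδ this
      linarith
    -- conclude by IVT
    by_contra hcon
    push_neg at hcon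
    have hxcont : ContinuousOn (fun s => ‖x s‖) (Set.Icc 0 t) := by
      intro s hs
      exact ((hcontx s hs.1).norm).continuousWithinAt
    have hsub := intermediate_value_Icc ht hxcont
    have hεmem : ε ∈ Set.Icc (‖x 0‖) (‖x t‖) :=
      ⟨le_trans (le_of_lt hx0) (min_le_right _ _), le_of_lt hcon⟩
    obtain ⟨s, hsmem, hseq⟩ := hsub hεmem
    have hVs : m ≤ V (x s) := hmin hseq
    have hVslt : V (x s) < m := by
      have h1 : V (x s) ≤ V (x 0) := hanti Set.self_mem_Ici hsmem.1 hsmem.1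
      have h2 : V (x 0) < m := by
        have : dist (x 0) 0 < δ := by
          rw [dist_zero_right]
          exact lt_of_lt_of_le hx0 (min_le_left _ _)
        exact hδ this
      linarith
    linarith
  · -- sphere is empty
    refine ⟨ε, hε, ?_⟩
    intro x hx hx0 t ht
    by_contra hcon
    push_neg at hcon
    have hxcont : ContinuousOn (fun s => ‖x s‖) (Set.Icc 0 t) := by
      intro s hs
      exact (((hx s hs.1).continuousAt).norm).continuousWithinAt
    have hsub := intermediate_value_Icc ht hxcont
    have hεmem : ε ∈ Set.Icc (‖x 0‖) (‖x t‖) := ⟨le_of_lt hx0, le_of_lt hcon⟩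
    obtain ⟨s, hsmem, hseq⟩ := hsub hεmem
    exact hS ⟨x s, hseq⟩
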